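/- arXiv:2008.06934 — 2 statements merged into one kernel-verified Lean document; each statement's English description precedes it below -/
import Mathlib

section
/- In the polynomial ring ℚ[X, Y], a polynomial p satisfies p(−X, Y) = p(X, Y), p(X, −Y) = p(X, Y) and p(Y, X) = p(X, Y) if and only if p belongs to the ℚ-subalgebra generated by X² + Y² and X²Y². Equivalently, the ring of invariants of ℚ[X, Y] under the order-8 group of ℚ-algebra automorphisms generated by X ↦ −X, by Y ↦ −Y, and by the swap X ↔ Y equals ℚ[X² + Y², X²Y²]. -/
open MvPolynomial

set_option maxRecDepth 4000

open MvPolynomial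

private lemma aeval_fin2 (f : Fin 2 → MvPolynomial (Fin 2) ℚ) (u : Fin 2 →₀ ℕ) (r : ℚ) :
    aeval f (monomial u r) = C r * f 0 ^ u 0 * f 1 ^ u 1 := by
  rw [aeval_monomial, algebraMap_eq, Finsupp.prod_fintype _ _ (by simp), Fin.prod_univ_two,
    mul_assoc]

private lemma monomial_fin2 (u : Fin 2 →₀ ℕ) (r : ℚ) :
    monomial u r = C r * X 0 ^ u 0 * X 1 ^ u 1 := by
  rw [monomial_eq, Finsupp.prod_fintype _ _ (by simp), Fin.prod_univ_two, mul_assoc]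

private lemma coeff_sign0 (p : MvPolynomial (Fin 2) ℚ) (d : Fin 2 →₀ ℕ) :
    coeff d (aeval ![-X 0, X 1] p) = (-1) ^ (d 0) * coeff d p := by
  induction p using MvPolynomial.induction_on' with
  | monomial u r =>
    have : aeval ![-X 0, X 1] (monomial u r) = monomial u ((-1) ^ (u 0) * r) := by
      rw [aeval_fin2, monomial_fin2]
      simp only [Matrix.cons_val_zero, Matrix.cons_val_one, Matrix.head_cons]
      rw [neg_pow]
      simp only [C_mul, map_pow, map_neg, map_one]
      ring
    rw [this, coeff_monomial, coeff_monomial]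
    split_ifs with h
    · subst h; ring
    · ring
  | add f g hf hg => rw [map_add]; simp only [coeff_add]; rw [hf, hg]; ring

private lemma coeff_sign1 (p : MvPolynomial (Fin 2) ℚ) (d : Fin 2 →₀ ℕ) :
    coeff d (aeval ![X 0, -X 1] p) = (-1) ^ (d 1) * coeff d p := by
  induction p using MvPolynomial.induction_on' with
  | monomial u r =>
    have : aeval ![X 0, -X 1] (monomial u r) = monomial u ((-1) ^ (u 1) * r) := by
      rw [aeval_fin2, monomial_fin2]
      simp only [Matrix.cons_val_zero, Matrix.cons_val_one, Matrix.head_cons]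
      rw [neg_pow]
      simp only [C_mul, map_pow, map_neg, map_one]
      ring
    rw [this, coeff_monomial, coeff_monomial]
    split_ifs with h
    · subst h; ring
    · ring
  | add f g hf hg => rw [map_add]; simp only [coeff_add]; rw [hf, hg]; ring

private lemma expand2_monomial (u : Fin 2 →₀ ℕ) (r : ℚ) :
    expand 2 (monomial u r) = monomial (2 • u) r := by
  have h : (expand 2 : MvPolynomial (Fin 2) ℚ →ₐ[ℚ] _) = aeval (fun i => X i ^ 2) := by
    apply algHom_ext; intro i; simp [expand_X]
  rw [h, aeval_fin2, monomial_fin2]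
  simp only [Finsupp.smul_apply, smul_eq_mul, ← pow_mul]

private lemma coeff_expand2 (q : MvPolynomial (Fin 2) ℚ) (d : Fin 2 →₀ ℕ) :
    coeff (2 • d) (expand 2 q) = coeff d q := by
  induction q using MvPolynomial.induction_on' with
  | monomial u r =>
    rw [expand2_monomial, coeff_monomial, coeff_monomial]
    congr 1
    simp only [eq_iff_iff]
    constructor
    · intro h
      ext i
      have := DFunLike.congr_fun h i
      simp only [Finsupp.smul_apply, smul_eq_mul] at this
      omega
    · rintro rfl; rfl
  | add f g hf hg => simp [map_add, coeff_add, hf, hg]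

private lemma expand2_injective (f g : MvPolynomial (Fin 2) ℚ)
    (h : expand 2 f = expand 2 g) : f = g := by
  ext d
  rw [← coeff_expand2 f d, ← coeff_expand2 g d, h]


/-- The ring of invariants of `ℚ[X, Y]` under the order-8 group of `ℚ`-algebra automorphisms
generated by `X ↦ −X`, by `Y ↦ −Y`, and by the swap `X ↔ Y` equals `ℚ[X² + Y², X²Y²]`:
a polynomial `p` satisfies `p(−X, Y) = p`, `p(X, −Y) = p` and `p(Y, X) = p` if and only if
it belongs to the `ℚ`-subalgebra generated by `X² + Y²` and `X²Y²`. -/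
theorem invariants_dihedral_eight (p : MvPolynomial (Fin 2) ℚ) :
    (aeval ![-X 0, X 1] p = p ∧ aeval ![X 0, -X 1] p = p ∧ aeval ![X 1, X 0] p = p) ↔
      p ∈ Algebra.adjoin ℚ
        ({X 0 ^ 2 + X 1 ^ 2, X 0 ^ 2 * X 1 ^ 2} : Set (MvPolynomial (Fin 2) ℚ)) := by
  constructor
  · rintro ⟨h1, h2, h3⟩
    -- evenness of exponents
    have heven : ∀ d ∈ p.support, ∀ i : Fin 2, Even (d i) := by
      intro d hd i
      by_contra hodd
      rw [Nat.not_even_iff_odd] at hodd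
      have hc : coeff d p ≠ 0 := mem_support_iff.mp hd
      have hi : ∀ j : Fin 2, j = 0 ∨ j = 1 := by decide
      rcases hi i with rfl | rfl
      · have := coeff_sign0 p d
        rw [h1, hodd.neg_one_pow] at this
        exact hc (by linarith)
      · have := coeff_sign1 p d
        rw [h2, hodd.neg_one_pow] at this
        exact hc (by linarith)
    set half : (Fin 2 →₀ ℕ) → (Fin 2 →₀ ℕ) := fun d => Finsupp.mapRange (· / 2) (by simp) d
      with hhalf
    set q : MvPolynomial (Fin 2) ℚ := p.support.sum fun d => monomial (half d) (coeff d p)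
      with hqdef
    have hq : expand 2 q = p := by
      rw [hqdef, map_sum]
      conv_rhs => rw [p.as_sum]
      apply Finset.sum_congr rfl
      intro d hd
      rw [expand2_monomial]
      have hhd : 2 • half d = d := by
        ext i
        obtain ⟨k, hk⟩ := heven d hd i
        simp only [hhalf, Finsupp.smul_apply, Finsupp.mapRange_apply, smul_eq_mul]
        omega
      rw [hhd]
    -- swap commutes with expand
    have hcomm : (aeval ![X 1, X 0] : MvPolynomial (Fin 2) ℚ →ₐ[ℚ] MvPolynomial (Fin 2) ℚ).comp (expand 2)
        = (expand 2).comp (aeval ![X 1, X 0]) := by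
      apply algHom_ext
      intro i
      fin_cases i <;> simp [expand_X]
    have hqswap : aeval ![X 1, X 0] q = q := by
      apply expand2_injective
      have hcq := congrArg (fun φ => φ q) hcomm
      simp only [AlgHom.comp_apply] at hcq
      calc (expand 2 (aeval ![X 1, X 0] q) : MvPolynomial (Fin 2) ℚ)
            = aeval ![X 1, X 0] (expand 2 q) := hcq.symm
        _ = p := by rw [hq, h3]
        _ = expand 2 q := hq.symm
    have hsym : q.IsSymmetric := by
      intro e
      have he : e = 1 ∨ e = Equiv.swap 0 1 := by revert e; decide
      have hrn : ∀ f : Fin 2 → Fin 2,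
          (rename f : MvPolynomial (Fin 2) ℚ →ₐ[ℚ] _) = aeval (fun i => X (f i)) := by
        intro f; apply algHom_ext; intro i; simp
      rcases he with rfl | rfl
      · simp [hrn]
      · rw [hrn]
        have : (fun i => (X (Equiv.swap 0 1 i) : MvPolynomial (Fin 2) ℚ)) = ![X 1, X 0] := by
          funext i; fin_cases i <;> simp [Equiv.swap_apply_left, Equiv.swap_apply_right]
        rw [this, hqswap]
    obtain ⟨r, hr⟩ := esymmAlgHom_surjective (σ := Fin 2) (R := ℚ) (n := 2)
      (by simp) ⟨q, hsym⟩
    have hrq : aeval (fun i : Fin 2 => esymm (Fin 2) ℚ (i + 1)) r = q := by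
      have := congrArg Subtype.val hr
      rwa [esymmAlgHom_apply] at this
    -- p = expand 2 (aeval esymms r) = aeval (expand 2 ∘ esymms) r
    have hp : p = aeval (fun i : Fin 2 => expand 2 (esymm (Fin 2) ℚ (i + 1))) r := by
      rw [← hq, ← hrq, ← AlgHom.comp_apply, ← comp_aeval]
    have he1 : esymm (Fin 2) ℚ 1 = X 0 + X 1 := by rw [esymm_one, Fin.sum_univ_two]
    have he2 : esymm (Fin 2) ℚ 2 = X 0 * X 1 := by
      rw [esymm]
      have : (Finset.univ.powersetCard 2 : Finset (Finset (Fin 2))) = {Finset.univ} := by decide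
      rw [this, Finset.sum_singleton, Fin.prod_univ_two]
    rw [hp]
    have hsub : Set.range (fun i : Fin 2 => expand 2 (esymm (Fin 2) ℚ (i + 1))) ⊆
        ({X 0 ^ 2 + X 1 ^ 2, X 0 ^ 2 * X 1 ^ 2} : Set (MvPolynomial (Fin 2) ℚ)) := by
      rintro x ⟨i, rfl⟩
      have hi : ∀ j : Fin 2, j = 0 ∨ j = 1 := by decide
      rcases hi i with rfl | rfl
      · refine Or.inl ?_
        norm_num [he1, expand_X, map_add]
      · refine Or.inr ?_
        norm_num [he2, expand_X, map_mul]
    have := Algebra.adjoin_mono (R := ℚ) hsub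
    rw [Algebra.adjoin_range_eq_range_aeval] at this
    exact this ⟨r, rfl⟩
  · intro hp
    have key : ∀ φ : MvPolynomial (Fin 2) ℚ →ₐ[ℚ] MvPolynomial (Fin 2) ℚ,
        φ (X 0 ^ 2 + X 1 ^ 2) = X 0 ^ 2 + X 1 ^ 2 → φ (X 0 ^ 2 * X 1 ^ 2) = X 0 ^ 2 * X 1 ^ 2 →
        φ p = p := by
      intro φ hg1 hg2
      have hle : Algebra.adjoin ℚ
          ({X 0 ^ 2 + X 1 ^ 2, X 0 ^ 2 * X 1 ^ 2} : Set (MvPolynomial (Fin 2) ℚ)) ≤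
          AlgHom.equalizer φ (AlgHom.id ℚ _) := by
        apply Algebra.adjoin_le
        rintro x (rfl | rfl)
        · exact hg1
        · exact hg2
      exact hle hp
    refine ⟨key _ ?_ ?_, key _ ?_ ?_, key _ ?_ ?_⟩ <;>
      · simp only [map_add, map_mul, map_pow, aeval_X, Matrix.cons_val_zero, Matrix.cons_val_one,
          Matrix.head_cons]
        ring
end

section
/- Let ρ be the ℚ-algebra automorphism of ℚ[X, Y] determined by X ↦ −Y, Y ↦ −X (an involution). A polynomial p ∈ ℚ[X, Y] satisfies ρ(p) = p if and only if p belongs to the ℚ-subalgebra generated by X − Y and XY. -/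
open MvPolynomial

private lemma gen1 :
    (X 0 - X 1 : MvPolynomial (Fin 2) ℚ) ∈
      Algebra.adjoin ℚ ({X 0 - X 1, X 0 * X 1} : Set (MvPolynomial (Fin 2) ℚ)) :=
  Algebra.subset_adjoin (by left; rfl)

private lemma gen2 :
    (X 0 * X 1 : MvPolynomial (Fin 2) ℚ) ∈
      Algebra.adjoin ℚ ({X 0 - X 1, X 0 * X 1} : Set (MvPolynomial (Fin 2) ℚ)) :=
  Algebra.subset_adjoin (by right; rfl)

/-- The power sums `X^n + (-Y)^n` lie in the subalgebra. -/
private lemma powsum_mem : ∀ n : ℕ,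
    ((X 0) ^ n + (-X 1) ^ n : MvPolynomial (Fin 2) ℚ) ∈
      Algebra.adjoin ℚ ({X 0 - X 1, X 0 * X 1} : Set (MvPolynomial (Fin 2) ℚ))
  | 0 => by
      simpa using add_mem (one_mem _) (one_mem _)
  | 1 => by
      simpa [sub_eq_add_neg] using gen1
  | (n + 2) => by
      have h1 := powsum_mem (n + 1)
      have h0 := powsum_mem n
      have key : ((X 0) ^ (n + 2) + (-X 1) ^ (n + 2) : MvPolynomial (Fin 2) ℚ)
          = (X 0 - X 1) * ((X 0) ^ (n + 1) + (-X 1) ^ (n + 1))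
            + (X 0 * X 1) * ((X 0) ^ n + (-X 1) ^ n) := by ring
      rw [key]
      exact add_mem (mul_mem gen1 h1) (mul_mem gen2 h0)

/-- For every monomial `m`, `m + ρ m` lies in the subalgebra. -/
private lemma mono_mem (d : Fin 2 →₀ ℕ) (c : ℚ) :
    (monomial d c : MvPolynomial (Fin 2) ℚ)
        + aeval ![-X 1, -X 0] (monomial d c) ∈
      Algebra.adjoin ℚ ({X 0 - X 1, X 0 * X 1} : Set (MvPolynomial (Fin 2) ℚ)) := by
  have hmono : (monomial d c : MvPolynomial (Fin 2) ℚ)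
      = C c * ((X 0) ^ (d 0) * (X 1) ^ (d 1)) := by
    rw [monomial_eq, Finsupp.prod_pow, Fin.prod_univ_two]
  have haeval : aeval ![-X 1, -X 0] (monomial d c)
      = C c * ((-X 1 : MvPolynomial (Fin 2) ℚ) ^ (d 0) * (-X 0) ^ (d 1)) := by
    rw [aeval_monomial, Finsupp.prod_pow, Fin.prod_univ_two]
    simp [algebraMap_eq]
  rw [haeval, hmono]
  rcases le_total (d 1) (d 0) with h | h
  · obtain ⟨n, hn⟩ := Nat.exists_eq_add_of_le h
    set b := d 1
    rw [hn]
    have e0 : ((X 0) ^ (b + n) * (X 1) ^ b : MvPolynomial (Fin 2) ℚ)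
        = (X 0 * X 1) ^ b * (X 0) ^ n := by
      rw [pow_add, mul_right_comm, ← mul_pow]
    have e1 : ((-X 1) ^ (b + n) * (-X 0) ^ b : MvPolynomial (Fin 2) ℚ)
        = (X 0 * X 1) ^ b * (-X 1) ^ n := by
      rw [pow_add, mul_right_comm, ← mul_pow, neg_mul_neg, mul_comm (X 1) (X 0)]
    rw [e0, e1, ← mul_add, ← mul_add, ← mul_assoc]
    exact mul_mem (mul_mem (by rw [← algebraMap_eq]; exact Subalgebra.algebraMap_mem _ c)
      (pow_mem gen2 b)) (powsum_mem n)
  · obtain ⟨n, hn⟩ := Nat.exists_eq_add_of_le h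
    set a := d 0
    rw [hn]
    have e0 : ((X 0) ^ a * (X 1) ^ (a + n) : MvPolynomial (Fin 2) ℚ)
        = (X 0 * X 1) ^ a * (X 1) ^ n := by
      rw [pow_add, ← mul_assoc, ← mul_pow]
    have e1 : ((-X 1) ^ a * (-X 0) ^ (a + n) : MvPolynomial (Fin 2) ℚ)
        = (X 0 * X 1) ^ a * (-X 0) ^ n := by
      rw [pow_add, ← mul_assoc, ← mul_pow, neg_mul_neg, mul_comm (X 1) (X 0)]
    have e2 : ((X 1) ^ n + (-X 0) ^ n : MvPolynomial (Fin 2) ℚ)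
        = (-1) ^ n * ((X 0) ^ n + (-X 1) ^ n) := by
      rw [mul_add, ← mul_pow, ← mul_pow, neg_one_mul, neg_one_mul, neg_neg, add_comm]
    rw [e0, e1, ← mul_add, ← mul_add, e2, ← mul_assoc]
    exact mul_mem (mul_mem (by rw [← algebraMap_eq]; exact Subalgebra.algebraMap_mem _ c)
      (pow_mem gen2 a)) (mul_mem (pow_mem (neg_mem (one_mem _)) n) (powsum_mem n))

/-- For every polynomial `q`, `q + ρ q` lies in the subalgebra. -/
private lemma key_mem (q : MvPolynomial (Fin 2) ℚ) :
    q + aeval ![-X 1, -X 0] q ∈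
      Algebra.adjoin ℚ ({X 0 - X 1, X 0 * X 1} : Set (MvPolynomial (Fin 2) ℚ)) := by
  induction q using MvPolynomial.induction_on' with
  | monomial d c => exact mono_mem d c
  | add p q hp hq =>
      rw [map_add]
      have : p + q + (aeval ![-X 1, -X 0] p + aeval ![-X 1, -X 0] q)
          = (p + aeval ![-X 1, -X 0] p) + (q + aeval ![-X 1, -X 0] q) := by ring
      rw [this]
      exact add_mem hp hq

/-- A polynomial `p ∈ ℚ[X, Y]` is fixed by the involutive `ℚ`-algebra automorphism
`ρ : X ↦ −Y, Y ↦ −X` if and only if it belongs to the `ℚ`-subalgebra generated by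
`X − Y` and `XY`. -/
theorem invariants_antidiagonal_involution (p : MvPolynomial (Fin 2) ℚ) :
    aeval ![-X 1, -X 0] p = p ↔
      p ∈ Algebra.adjoin ℚ ({X 0 - X 1, X 0 * X 1} : Set (MvPolynomial (Fin 2) ℚ)) := by
  constructor
  · intro h
    have hmem := key_mem p
    rw [h] at hmem
    have h2 : ((2 : ℚ))⁻¹ • (p + p) = p := by
      rw [← two_smul ℚ p, smul_smul]; norm_num
    rw [← h2]
    exact Subalgebra.smul_mem _ hmem _
  · intro h
    refine Algebra.adjoin_induction ?_ ?_ ?_ ?_ h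
    · rintro x (rfl | rfl)
      · rw [map_sub, aeval_X, aeval_X]
        simp only [Matrix.cons_val_zero, Matrix.cons_val_one, Matrix.head_cons]
        ring
      · rw [map_mul, aeval_X, aeval_X]
        simp [mul_comm]
    · intro r
      simp
    · intro x y _ _ hx hy
      rw [map_add, hx, hy]
    · intro x y _ _ hx hy
      rw [map_mul, hx, hy]
end
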